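/- Let W_ζ be the complex span of the matrices λ_{ij} (with E_{ij} matrix units, indices in {0,...,2^p−1}) over all unordered pairs {i,j} with i XOR j = ζ, and Ŵ_ζ the span of the corresponding λ̂_{ij}. Then for nonzero ζ ≠ η in (Z/2Z)^p: [W_ζ, W_η] ⊆ Ŵ_{ζ XOR η}, [W_ζ, Ŵ_η] ⊆ W_{ζ XOR η}, and [Ŵ_ζ, Ŵ_η] ⊆ Ŵ_{ζ XOR η}. -/

import Mathlib

open Matrix

/-- `λ_{ij} = E_{ij} + E_{ji}`, indices identified with `(ℤ/2ℤ)^p`. -/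
noncomputable def lam {p : ℕ} (i j : Fin p → ZMod 2) :
    Matrix (Fin p → ZMod 2) (Fin p → ZMod 2) ℂ :=
  Matrix.single i j 1 + Matrix.single j i 1

/-- `λ̂_{ij} = -i·E_{ij} + i·E_{ji}` (so `λ̂_{ij} = -λ̂_{ji}`). -/
noncomputable def lamHat {p : ℕ} (i j : Fin p → ZMod 2) :
    Matrix (Fin p → ZMod 2) (Fin p → ZMod 2) ℂ :=
  (-Complex.I) • Matrix.single i j 1 + Complex.I • Matrix.single j i 1

/-- `W_ζ`: span of the `λ_{ij}` over pairs with `i XOR j = ζ`. -/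
noncomputable def W {p : ℕ} (ζ : Fin p → ZMod 2) :
    Submodule ℂ (Matrix (Fin p → ZMod 2) (Fin p → ZMod 2) ℂ) :=
  Submodule.span ℂ {A | ∃ i j, i + j = ζ ∧ A = lam i j}

/-- `Ŵ_ζ`: span of the `λ̂_{ij}` over pairs with `i XOR j = ζ`. -/
noncomputable def What {p : ℕ} (ζ : Fin p → ZMod 2) :
    Submodule ℂ (Matrix (Fin p → ZMod 2) (Fin p → ZMod 2) ℂ) :=
  Submodule.span ℂ {A | ∃ i j, i + j = ζ ∧ A = lamHat i j}

section Helpers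

set_option linter.unusedSectionVars false

variable {n : Type*} [Fintype n] [DecidableEq n]

lemma Emul' (i j k l : n) (a b : ℂ) :
    Matrix.single i j a * Matrix.single k l b =
      if j = k then Matrix.single i l (a*b) else (0 : Matrix n n ℂ) := by
  split_ifs with h
  · subst h; exact Matrix.single_mul_single_same (c := a) i j l b
  · exact Matrix.single_mul_single_of_ne (c := a) i j k h b

lemma Eneg' (i j : n) : Matrix.single i j (-1 : ℂ) = -Matrix.single i j 1 := by
  rw [← neg_one_smul ℂ (Matrix.single i j (1:ℂ)), Matrix.smul_single]
  norm_num

variable {p : ℕ}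

lemma lam_swap (i j : Fin p → ZMod 2) : lam i j = lam j i := by simp [lam, add_comm]

lemma lamHat_swap (i j : Fin p → ZMod 2) : lamHat i j = -lamHat j i := by
  simp [lamHat, smul_smul]

lemma L1' (i j l : Fin p → ZMod 2) (hij : i ≠ j) (hjl : j ≠ l) (hil : i ≠ l) :
    lam i j * lam j l - lam j l * lam i j = Complex.I • lamHat i l := by
  simp [lam, lamHat, add_mul, mul_add, Emul', hij, hjl, hil, hij.symm, hjl.symm, hil.symm,
    smul_add, smul_smul, Complex.I_mul_I, neg_smul, one_smul, mul_neg, neg_neg, Eneg',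
    neg_one_smul]
  abel

lemma L2' (i j l : Fin p → ZMod 2) (hij : i ≠ j) (hjl : j ≠ l) (hil : i ≠ l) :
    lam i j * lamHat j l - lamHat j l * lam i j = (-Complex.I) • lam i l := by
  simp [lam, lamHat, add_mul, mul_add, Emul', hij, hjl, hil, hij.symm, hjl.symm, hil.symm,
    smul_add, smul_smul, Complex.I_mul_I, neg_smul, one_smul, mul_neg, neg_neg, mul_smul_comm,
    smul_mul_assoc, Eneg', neg_one_smul]
  abel

lemma L3' (i j l : Fin p → ZMod 2) (hij : i ≠ j) (hjl : j ≠ l) (hil : i ≠ l) :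
    lamHat i j * lamHat j l - lamHat j l * lamHat i j = (-Complex.I) • lamHat i l := by
  simp [lam, lamHat, add_mul, mul_add, Emul', hij, hjl, hil, hij.symm, hjl.symm, hil.symm,
    smul_add, smul_smul, Complex.I_mul_I, neg_smul, one_smul, mul_neg, neg_neg, mul_smul_comm,
    smul_mul_assoc, Eneg', neg_one_smul]

lemma Z1' (i j k l : Fin p → ZMod 2) (hjk : j ≠ k) (hjl : j ≠ l) (hik : i ≠ k) (hil : i ≠ l) :
    lam i j * lam k l - lam k l * lam i j = 0 := by
  simp [lam, add_mul, mul_add, Emul', hjk, hjl, hik, hil, hjk.symm, hjl.symm, hik.symm, hil.symm]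

lemma Z2' (i j k l : Fin p → ZMod 2) (hjk : j ≠ k) (hjl : j ≠ l) (hik : i ≠ k) (hil : i ≠ l) :
    lam i j * lamHat k l - lamHat k l * lam i j = 0 := by
  simp [lam, lamHat, add_mul, mul_add, Emul', hjk, hjl, hik, hil, hjk.symm, hjl.symm, hik.symm,
    hil.symm, mul_smul_comm, smul_mul_assoc]

lemma Z3' (i j k l : Fin p → ZMod 2) (hjk : j ≠ k) (hjl : j ≠ l) (hik : i ≠ k) (hil : i ≠ l) :
    lamHat i j * lamHat k l - lamHat k l * lamHat i j = 0 := by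
  simp [lamHat, add_mul, mul_add, Emul', hjk, hjl, hik, hil, hjk.symm, hjl.symm, hik.symm,
    hil.symm, mul_smul_comm, smul_mul_assoc]

lemma span_comm' {M : Type*} [NonUnitalNonAssocRing M] [Module ℂ M]
    [SMulCommClass ℂ M M] [IsScalarTower ℂ M M]
    (s t : Set M) (P : Submodule ℂ M)
    (h : ∀ a ∈ s, ∀ b ∈ t, a * b - b * a ∈ P) :
    ∀ A ∈ Submodule.span ℂ s, ∀ B ∈ Submodule.span ℂ t, A * B - B * A ∈ P := by
  intro A hA
  induction hA using Submodule.span_induction with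
  | mem a ha =>
    intro B hB
    induction hB using Submodule.span_induction with
    | mem b hb => exact h a ha b hb
    | zero => simp
    | add x y hx hy hx' hy' =>
      have : a * (x + y) - (x + y) * a = (a * x - x * a) + (a * y - y * a) := by
        noncomm_ring
      rw [this]; exact P.add_mem hx' hy'
    | smul c x hx hx' =>
      have : a * (c • x) - (c • x) * a = c • (a * x - x * a) := by
        rw [mul_smul_comm, smul_mul_assoc, smul_sub]
      rw [this]; exact P.smul_mem c hx'
  | zero => intro B hB; simp
  | add x y hx hy hx' hy' =>
    intro B hB
    have : (x + y) * B - B * (x + y) = (x * B - B * x) + (y * B - B * y) := by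
      noncomm_ring
    rw [this]; exact P.add_mem (hx' B hB) (hy' B hB)
  | smul c x hx hx' =>
    intro B hB
    have : (c • x) * B - B * (c • x) = c • (x * B - B * x) := by
      rw [mul_smul_comm, smul_mul_assoc, smul_sub]
    rw [this]; exact P.smul_mem c (hx' B hB)

lemma addself (x : Fin p → ZMod 2) : x + x = 0 := by
  funext t
  have : ∀ a : ZMod 2, a + a = 0 := by decide
  exact this (x t)

lemma negleft {M : Type*} [NonUnitalNonAssocRing M] (X B : M) :
    (-X) * B - B * (-X) = -(X * B - B * X) := by noncomm_ring

lemma negright {M : Type*} [NonUnitalNonAssocRing M] (A Y : M) :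
    A * (-Y) - (-Y) * A = -(A * Y - Y * A) := by noncomm_ring

lemma negboth {M : Type*} [NonUnitalNonAssocRing M] (X Y : M) :
    (-X) * (-Y) - (-Y) * (-X) = X * Y - Y * X := by noncomm_ring

end Helpers

section Gen

variable {p : ℕ} {ζ η : Fin p → ZMod 2}

lemma idx1 {i j l : Fin p → ZMod 2} (hij : i + j = ζ) (hjl : j + l = η) :
    i + l = ζ + η := by
  rw [← hij, ← hjl, show i + j + (j + l) = (j + j) + (i + l) by abel, addself, zero_add]

lemma ne_of_sum {i j k l : Fin p → ZMod 2} (hij : i + j = ζ) (hkl : k + l = η)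
    (hne : ζ ≠ η) : ¬(j = k ∧ i = l) := by
  rintro ⟨rfl, rfl⟩
  exact hne (by rw [← hij, ← hkl, add_comm])

lemma ne_of_sum' {i j k l : Fin p → ZMod 2} (hij : i + j = ζ) (hkl : k + l = η)
    (hne : ζ ≠ η) : ¬(j = l ∧ i = k) := by
  rintro ⟨rfl, rfl⟩
  exact hne (by rw [← hij, ← hkl])

lemma ne_self_of {i j : Fin p → ZMod 2} (hij : i + j = ζ) (hζ : ζ ≠ 0) : i ≠ j := by
  rintro rfl; exact hζ (by rw [← hij, addself])

lemma gen_ll (hζ : ζ ≠ 0) (hη : η ≠ 0) (hne : ζ ≠ η) (i j k l : Fin p → ZMod 2)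
    (hij : i + j = ζ) (hkl : k + l = η) :
    lam i j * lam k l - lam k l * lam i j ∈ What (ζ + η) := by
  have hij' : i ≠ j := ne_self_of hij hζ
  have hkl' : k ≠ l := ne_self_of hkl hη
  by_cases h1 : j = k
  · subst h1
    have hil : i ≠ l := fun h => ne_of_sum hij hkl hne ⟨rfl, h⟩
    rw [L1' i j l hij' hkl' hil]
    exact Submodule.smul_mem _ _ (Submodule.subset_span ⟨i, l, idx1 hij hkl, rfl⟩)
  by_cases h2 : j = l
  · subst h2
    have hik : i ≠ k := fun h => ne_of_sum' hij hkl hne ⟨rfl, h⟩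
    rw [lam_swap k j, L1' i j k hij' (Ne.symm hkl') hik]
    exact Submodule.smul_mem _ _
      (Submodule.subset_span ⟨i, k, idx1 hij (by rw [← hkl, add_comm]), rfl⟩)
  by_cases h3 : i = k
  · subst h3
    have hjl : j ≠ l := fun h => ne_of_sum' hij hkl hne ⟨h, rfl⟩
    rw [lam_swap i j, L1' j i l (Ne.symm hij') hkl' hjl]
    exact Submodule.smul_mem _ _
      (Submodule.subset_span ⟨j, l, idx1 (by rw [← hij, add_comm]) hkl, rfl⟩)
  by_cases h4 : i = l
  · subst h4
    rw [lam_swap i j, lam_swap k i, L1' j i k (Ne.symm hij') (Ne.symm hkl') h1]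
    exact Submodule.smul_mem _ _
      (Submodule.subset_span ⟨j, k, idx1 (by rw [← hij, add_comm]) (by rw [← hkl, add_comm]),
        rfl⟩)
  · rw [Z1' i j k l h1 h2 h3 h4]
    exact zero_mem _

lemma gen_lh (hζ : ζ ≠ 0) (hη : η ≠ 0) (hne : ζ ≠ η) (i j k l : Fin p → ZMod 2)
    (hij : i + j = ζ) (hkl : k + l = η) :
    lam i j * lamHat k l - lamHat k l * lam i j ∈ W (ζ + η) := by
  have hij' : i ≠ j := ne_self_of hij hζ
  have hkl' : k ≠ l := ne_self_of hkl hη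
  by_cases h1 : j = k
  · subst h1
    have hil : i ≠ l := fun h => ne_of_sum hij hkl hne ⟨rfl, h⟩
    rw [L2' i j l hij' hkl' hil]
    exact Submodule.smul_mem _ _ (Submodule.subset_span ⟨i, l, idx1 hij hkl, rfl⟩)
  by_cases h2 : j = l
  · subst h2
    have hik : i ≠ k := fun h => ne_of_sum' hij hkl hne ⟨rfl, h⟩
    rw [lamHat_swap k j, negright, L2' i j k hij' (Ne.symm hkl') hik]
    exact Submodule.neg_mem _ (Submodule.smul_mem _ _
      (Submodule.subset_span ⟨i, k, idx1 hij (by rw [← hkl, add_comm]), rfl⟩))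
  by_cases h3 : i = k
  · subst h3
    have hjl : j ≠ l := fun h => ne_of_sum' hij hkl hne ⟨h, rfl⟩
    rw [lam_swap i j, L2' j i l (Ne.symm hij') hkl' hjl]
    exact Submodule.smul_mem _ _
      (Submodule.subset_span ⟨j, l, idx1 (by rw [← hij, add_comm]) hkl, rfl⟩)
  by_cases h4 : i = l
  · subst h4
    rw [lam_swap i j, lamHat_swap k i, negright, L2' j i k (Ne.symm hij') (Ne.symm hkl') h1]
    exact Submodule.neg_mem _ (Submodule.smul_mem _ _
      (Submodule.subset_span ⟨j, k, idx1 (by rw [← hij, add_comm]) (by rw [← hkl, add_comm]),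
        rfl⟩))
  · rw [Z2' i j k l h1 h2 h3 h4]
    exact zero_mem _

lemma gen_hh (hζ : ζ ≠ 0) (hη : η ≠ 0) (hne : ζ ≠ η) (i j k l : Fin p → ZMod 2)
    (hij : i + j = ζ) (hkl : k + l = η) :
    lamHat i j * lamHat k l - lamHat k l * lamHat i j ∈ What (ζ + η) := by
  have hij' : i ≠ j := ne_self_of hij hζ
  have hkl' : k ≠ l := ne_self_of hkl hη
  by_cases h1 : j = k
  · subst h1
    have hil : i ≠ l := fun h => ne_of_sum hij hkl hne ⟨rfl, h⟩
    rw [L3' i j l hij' hkl' hil]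
    exact Submodule.smul_mem _ _ (Submodule.subset_span ⟨i, l, idx1 hij hkl, rfl⟩)
  by_cases h2 : j = l
  · subst h2
    have hik : i ≠ k := fun h => ne_of_sum' hij hkl hne ⟨rfl, h⟩
    rw [lamHat_swap k j, negright, L3' i j k hij' (Ne.symm hkl') hik]
    exact Submodule.neg_mem _ (Submodule.smul_mem _ _
      (Submodule.subset_span ⟨i, k, idx1 hij (by rw [← hkl, add_comm]), rfl⟩))
  by_cases h3 : i = k
  · subst h3
    have hjl : j ≠ l := fun h => ne_of_sum' hij hkl hne ⟨h, rfl⟩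
    rw [lamHat_swap i j, negleft, L3' j i l (Ne.symm hij') hkl' hjl]
    exact Submodule.neg_mem _ (Submodule.smul_mem _ _
      (Submodule.subset_span ⟨j, l, idx1 (by rw [← hij, add_comm]) hkl, rfl⟩))
  by_cases h4 : i = l
  · subst h4
    rw [lamHat_swap i j, lamHat_swap k i, negboth, L3' j i k (Ne.symm hij') (Ne.symm hkl') h1]
    exact Submodule.smul_mem _ _
      (Submodule.subset_span ⟨j, k, idx1 (by rw [← hij, add_comm]) (by rw [← hkl, add_comm]),
        rfl⟩)
  · rw [Z3' i j k l h1 h2 h3 h4]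
    exact zero_mem _

end Gen

/-- Closure conditions: `[W_ζ, W_η] ⊆ Ŵ_{ζ+η}`, `[W_ζ, Ŵ_η] ⊆ W_{ζ+η}`,
`[Ŵ_ζ, Ŵ_η] ⊆ Ŵ_{ζ+η}` for distinct nonzero `ζ, η`. -/
theorem quotient_algebra_closure {p : ℕ} (ζ η : Fin p → ZMod 2)
    (hζ : ζ ≠ 0) (hη : η ≠ 0) (hne : ζ ≠ η) :
    (∀ A ∈ W ζ, ∀ B ∈ W η, A * B - B * A ∈ What (ζ + η)) ∧
    (∀ A ∈ W ζ, ∀ B ∈ What η, A * B - B * A ∈ W (ζ + η)) ∧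
    (∀ A ∈ What ζ, ∀ B ∈ What η, A * B - B * A ∈ What (ζ + η)) := by
  refine ⟨span_comm' _ _ _ ?_, span_comm' _ _ _ ?_, span_comm' _ _ _ ?_⟩
  · rintro a ⟨i, j, hij, rfl⟩ b ⟨k, l, hkl, rfl⟩
    exact gen_ll hζ hη hne i j k l hij hkl
  · rintro a ⟨i, j, hij, rfl⟩ b ⟨k, l, hkl, rfl⟩
    exact gen_lh hζ hη hne i j k l hij hkl
  · rintro a ⟨i, j, hij, rfl⟩ b ⟨k, l, hkl, rfl⟩
    exact gen_hh hζ hη hne i j k l hij hkl
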